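/- Let Γ be a discrete subgroup of SL(2,ℝ). Suppose A, B ∈ Γ with |tr(A)| > 2 (A is hyperbolic), tr(B) = 2 or tr(B) = −2, and B ≠ I, B ≠ −I (B is parabolic). Then A and B have no common eigenvector: there is no nonzero vector v ∈ ℝ² such that Av = a·v and Bv = b·v for some real numbers a, b. In other words, in a discrete subgroup of SL(2,ℝ), a hyperbolic element and a parabolic element cannot share a fixed point on the boundary of the hyperbolic plane. -/

import Mathlib

def Kmat (v : Fin 2 → ℝ) : Matrix (Fin 2) (Fin 2) ℝ :=
  !![-(v 0 * v 1), v 0 ^ 2; -(v 1 ^ 2), v 0 * v 1]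

lemma Kmat_mul_self (v : Fin 2 → ℝ) : Kmat v * Kmat v = 0 := by
  ext i j
  fin_cases i <;> fin_cases j <;>
    simp [Kmat, Matrix.mul_apply, Matrix.vecMul, dotProduct, Fin.sum_univ_two] <;> ring

lemma char_eq (M : Matrix (Fin 2) (Fin 2) ℝ) (v : Fin 2 → ℝ) (a : ℝ) (hv : v ≠ 0)
    (hdet : M.det = 1) (h : M.mulVec v = a • v) :
    a ^ 2 - a * (M 0 0 + M 1 1) + 1 = 0 := by
  have e0 := congrFun h 0
  have e1 := congrFun h 1
  simp [Matrix.mulVec, dotProduct, Fin.sum_univ_two] at e0 e1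
  rw [Matrix.det_fin_two] at hdet
  have hp : v 0 * (a ^ 2 - a * (M 0 0 + M 1 1) + 1) = 0 := by
    linear_combination (-(v 0)) * hdet + (-(M 0 1)) * e1 + (M 1 1 - a) * e0
  have hq : v 1 * (a ^ 2 - a * (M 0 0 + M 1 1) + 1) = 0 := by
    linear_combination (-(v 1)) * hdet + (-(M 1 0)) * e0 + (M 0 0 - a) * e1
  rcases mul_eq_zero.1 hp with h0 | hz
  · rcases mul_eq_zero.1 hq with h1 | hz'
    · refine absurd (funext fun i => ?_) hv
      fin_cases i
      · exact h0
      · exact h1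
    · exact hz'
  · exact hz

lemma rank_one (N : Matrix (Fin 2) (Fin 2) ℝ) (v : Fin 2 → ℝ) (hv : v ≠ 0)
    (h0 : N.mulVec v = 0) (htr : N 0 0 + N 1 1 = 0) :
    ∃ c : ℝ, N = c • Kmat v := by
  have e0 := congrFun h0 0
  have e1 := congrFun h0 1
  simp [Matrix.mulVec, dotProduct, Fin.sum_univ_two] at e0 e1
  have hpq : v 0 ≠ 0 ∨ v 1 ≠ 0 := by
    by_contra h
    push_neg at h
    exact hv (funext fun i => by fin_cases i <;> simp [h.1, h.2])
  rcases hpq with hp | hq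
  · refine ⟨N 0 1 / v 0 ^ 2, ?_⟩
    ext i j
    fin_cases i <;> fin_cases j <;>
        simp only [Kmat, Matrix.smul_apply, Matrix.cons_val', Matrix.cons_val_zero,
          Matrix.cons_val_one, Matrix.head_cons, Matrix.head_fin_const, Matrix.empty_val',
          Matrix.cons_val_fin_one, smul_eq_mul, Matrix.of_apply, Fin.zero_eta, Fin.mk_one] <;> field_simp
    · linear_combination e0
    · linear_combination (v 0) * e1 - (v 0) * (v 1) * htr + (v 1) * e0
    · linear_combination (v 0) * htr - e0
  · refine ⟨-(N 1 0) / v 1 ^ 2, ?_⟩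
    ext i j
    fin_cases i <;> fin_cases j <;>
        simp only [Kmat, Matrix.smul_apply, Matrix.cons_val', Matrix.cons_val_zero,
          Matrix.cons_val_one, Matrix.head_cons, Matrix.head_fin_const, Matrix.empty_val',
          Matrix.cons_val_fin_one, smul_eq_mul, Matrix.of_apply, Fin.zero_eta, Fin.mk_one] <;> field_simp
    · linear_combination (v 1) * htr - e1
    · linear_combination (v 1) * e0 - (v 0) * (v 1) * htr + (v 0) * e1
    · linear_combination e1

lemma mul_Kmat (M : Matrix (Fin 2) (Fin 2) ℝ) (v : Fin 2 → ℝ) (a : ℝ)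
    (h : M.mulVec v = a • v) : M * Kmat v = a • Kmat v := by
  have e0 := congrFun h 0
  have e1 := congrFun h 1
  simp [Matrix.mulVec, dotProduct, Fin.sum_univ_two] at e0 e1
  ext i j
  fin_cases i <;> fin_cases j <;>
      simp [Kmat, Matrix.mul_apply, Matrix.vecMul, dotProduct, Fin.sum_univ_two]
  · linear_combination (-(v 1)) * e0
  · linear_combination (v 0) * e0
  · linear_combination (-(v 1)) * e1
  · linear_combination (v 0) * e1

lemma Kmat_mul (M : Matrix (Fin 2) (Fin 2) ℝ) (v : Fin 2 → ℝ) (a : ℝ)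
    (h : M.mulVec v = a • v) (hchar : a ^ 2 - a * (M 0 0 + M 1 1) + 1 = 0) :
    a • (Kmat v * M) = Kmat v := by
  have e0 := congrFun h 0
  have e1 := congrFun h 1
  simp [Matrix.mulVec, dotProduct, Fin.sum_univ_two] at e0 e1
  ext i j
  fin_cases i <;> fin_cases j <;>
      simp [Kmat, Matrix.mul_apply, Matrix.vecMul, dotProduct, Fin.sum_univ_two,
        Matrix.vecHead, Matrix.vecTail]
  · linear_combination a * (v 0) * e1 + (v 0) * (v 1) * hchar
  · linear_combination (-(a * (v 0))) * e0 - (v 0) ^ 2 * hchar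
  · linear_combination a * (v 1) * e1 + (v 1) ^ 2 * hchar
  · linear_combination (-(a * (v 1))) * e0 - (v 0) * (v 1) * hchar

/-- `SL(2,ℝ)` with its natural topology, induced from the space of `2 × 2` real matrices. -/
instance : TopologicalSpace (Matrix.SpecialLinearGroup (Fin 2) ℝ) :=
  TopologicalSpace.induced
    (fun g : Matrix.SpecialLinearGroup (Fin 2) ℝ => (g : Matrix (Fin 2) (Fin 2) ℝ))
    inferInstance

theorem no_common_eigenvector_of_hyperbolic_parabolic
    (Γ : Subgroup (Matrix.SpecialLinearGroup (Fin 2) ℝ)) (hdisc : DiscreteTopology Γ)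
    (A B : Matrix.SpecialLinearGroup (Fin 2) ℝ) (hA : A ∈ Γ) (hB : B ∈ Γ)
    (hAhyp : 2 < |Matrix.trace (A : Matrix (Fin 2) (Fin 2) ℝ)|)
    (hBtr : Matrix.trace (B : Matrix (Fin 2) (Fin 2) ℝ) = 2 ∨
      Matrix.trace (B : Matrix (Fin 2) (Fin 2) ℝ) = -2)
    (hB1 : (B : Matrix (Fin 2) (Fin 2) ℝ) ≠ 1)
    (hBneg1 : (B : Matrix (Fin 2) (Fin 2) ℝ) ≠ -1) :
    ¬ ∃ v : Fin 2 → ℝ, v ≠ 0 ∧ ∃ a b : ℝ,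
      (A : Matrix (Fin 2) (Fin 2) ℝ).mulVec v = a • v ∧
      (B : Matrix (Fin 2) (Fin 2) ℝ).mulVec v = b • v := by
  rintro ⟨v, hv, a, b, hAv, hBv⟩
  rw [Matrix.trace_fin_two] at hAhyp hBtr
  set MA : Matrix (Fin 2) (Fin 2) ℝ := (A : Matrix (Fin 2) (Fin 2) ℝ) with hMAdef
  set MB : Matrix (Fin 2) (Fin 2) ℝ := (B : Matrix (Fin 2) (Fin 2) ℝ) with hMBdef
  set K : Matrix (Fin 2) (Fin 2) ℝ := Kmat v with hKdef
  -- characteristic equations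
  have hcharA : a ^ 2 - a * (MA 0 0 + MA 1 1) + 1 = 0 := char_eq MA v a hv A.det_coe hAv
  have hcharB : b ^ 2 - b * (MB 0 0 + MB 1 1) + 1 = 0 := char_eq MB v b hv B.det_coe hBv
  have ha0 : a ≠ 0 := by rintro rfl; simp at hcharA
  have ha1 : a ≠ 1 := by
    rintro rfl
    have h2 : MA 0 0 + MA 1 1 = 2 := by linarith
    rw [h2] at hAhyp; norm_num at hAhyp
  have haneg1 : a ≠ -1 := by
    rintro rfl
    have h2 : MA 0 0 + MA 1 1 = -2 := by nlinarith
    rw [h2] at hAhyp; rw [abs_neg] at hAhyp; norm_num at hAhyp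
  have hasq : a ^ 2 ≠ 1 := fun h => by
    rcases mul_self_eq_one_iff.mp (by nlinarith : a * a = 1) with h1 | h1
    · exact ha1 h1
    · exact haneg1 h1
  -- b = ±1
  have hb : b = 1 ∨ b = -1 := by
    rcases hBtr with h | h
    · left; nlinarith [hcharB, sq_nonneg (b - 1)]
    · right; nlinarith [hcharB, sq_nonneg (b + 1)]
  have hb2 : b * b = 1 := by rcases hb with rfl | rfl <;> norm_num
  -- the nilpotent part of B
  set N : Matrix (Fin 2) (Fin 2) ℝ := b • MB - 1 with hNdef
  have hN0 : N.mulVec v = 0 := by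
    rw [hNdef, Matrix.sub_mulVec, Matrix.smul_mulVec, hBv, Matrix.one_mulVec,
      smul_smul, hb2, one_smul, sub_self]
  have hNtr : N 0 0 + N 1 1 = 0 := by
    have hbtr : b * (MB 0 0 + MB 1 1) = 2 := by
      rcases hb with rfl | rfl <;> rcases hBtr with h | h <;> simp_all <;> linarith
    simp only [hNdef, Matrix.sub_apply, Matrix.smul_apply, Matrix.one_apply, smul_eq_mul]
    norm_num
    linarith
  obtain ⟨c, hc⟩ := rank_one N v hv hN0 hNtr
  have hKne : K ≠ 0 := by
    intro h
    have h01 : v 0 ^ 2 = 0 := by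
      have := congrFun (congrFun h 0) 1
      simpa [hKdef, Kmat] using this
    have h10 : v 1 ^ 2 = 0 := by
      have := congrFun (congrFun h 1) 0
      simpa [hKdef, Kmat] using this
    apply hv
    funext i
    fin_cases i
    · exact pow_eq_zero_iff (n := 2) (by norm_num) |>.mp h01
    · exact pow_eq_zero_iff (n := 2) (by norm_num) |>.mp h10
  have hMBK : MB = b • ((1 : Matrix (Fin 2) (Fin 2) ℝ) + c • K) := by
    have : b • MB = 1 + c • K := by rw [← hc, hNdef]; abel
    calc MB = (b * b) • MB := by rw [hb2, one_smul]
    _ = b • (b • MB) := by rw [smul_smul]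
    _ = b • (1 + c • K) := by rw [this]
  have hc0 : c ≠ 0 := by
    rintro rfl
    simp only [zero_smul, add_zero] at hMBK
    rcases hb with rfl | rfl
    · exact hB1 (by simpa using hMBK)
    · exact hBneg1 (by simpa using hMBK)
  -- inverse matrices
  set MAi : Matrix (Fin 2) (Fin 2) ℝ := ((A⁻¹ : Matrix.SpecialLinearGroup (Fin 2) ℝ) :
    Matrix (Fin 2) (Fin 2) ℝ) with hMAidef
  set MBi : Matrix (Fin 2) (Fin 2) ℝ := ((B⁻¹ : Matrix.SpecialLinearGroup (Fin 2) ℝ) :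
    Matrix (Fin 2) (Fin 2) ℝ) with hMBidef
  have hAAi : MA * MAi = 1 := by
    rw [hMAdef, hMAidef, ← Matrix.SpecialLinearGroup.coe_mul, mul_inv_cancel,
      Matrix.SpecialLinearGroup.coe_one]
  have hAiA : MAi * MA = 1 := by
    rw [hMAdef, hMAidef, ← Matrix.SpecialLinearGroup.coe_mul, inv_mul_cancel,
      Matrix.SpecialLinearGroup.coe_one]
  have hBBi : MB * MBi = 1 := by
    rw [hMBdef, hMBidef, ← Matrix.SpecialLinearGroup.coe_mul, mul_inv_cancel,
      Matrix.SpecialLinearGroup.coe_one]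
  have hBiB : MBi * MB = 1 := by
    rw [hMBdef, hMBidef, ← Matrix.SpecialLinearGroup.coe_mul, inv_mul_cancel,
      Matrix.SpecialLinearGroup.coe_one]
  -- K relations
  have hAK : MA * K = a • K := mul_Kmat MA v a hAv
  have hKA : a • (K * MA) = K := Kmat_mul MA v a hAv hcharA
  have hKAi : K * MAi = a • K := by
    calc K * MAi = (a • (K * MA)) * MAi := by rw [hKA]
    _ = a • (K * (MA * MAi)) := by rw [smul_mul_assoc, mul_assoc]
    _ = a • K := by rw [hAAi, mul_one]
  have hAiK : MAi * K = a⁻¹ • K := by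
    have h1 : a • (MAi * K) = K := by
      calc a • (MAi * K) = MAi * (a • K) := (mul_smul_comm a MAi K).symm
      _ = MAi * (MA * K) := by rw [hAK]
      _ = (MAi * MA) * K := by rw [mul_assoc]
      _ = K := by rw [hAiA, one_mul]
    calc MAi * K = (a⁻¹ * a) • (MAi * K) := by rw [inv_mul_cancel₀ ha0, one_smul]
    _ = a⁻¹ • (a • (MAi * K)) := by rw [smul_smul]
    _ = a⁻¹ • K := by rw [h1]
  -- B⁻¹'s matrix
  have hMBiK : MBi = b • ((1 : Matrix (Fin 2) (Fin 2) ℝ) - c • K) := by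
    have hY : MB * (b • ((1 : Matrix (Fin 2) (Fin 2) ℝ) - c • K)) = 1 := by
      rw [hMBK]
      rw [smul_mul_assoc, mul_smul_comm, smul_smul, hb2, one_smul]
      rw [mul_sub, mul_one, add_mul, one_mul, mul_smul_comm, smul_mul_assoc, smul_smul]
      rw [Kmat_mul_self]
      simp only [smul_zero, sub_zero, ← hKdef]
      abel
    calc MBi = MBi * (MB * (b • (1 - c • K))) := by rw [hY, mul_one]
    _ = (MBi * MB) * (b • (1 - c • K)) := by rw [mul_assoc]
    _ = b • (1 - c • K) := by rw [hBiB, one_mul]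
  -- the commutator has matrix 1 + d • K
  set d : ℝ := c * (a ^ 2 - 1) with hddef
  have hd0 : d ≠ 0 := mul_ne_zero hc0 (sub_ne_zero.mpr hasq)
  set g : Matrix.SpecialLinearGroup (Fin 2) ℝ := A * B * A⁻¹ * B⁻¹ with hgdef
  have hgΓ : g ∈ Γ := mul_mem (mul_mem (mul_mem hA hB) (inv_mem hA)) (inv_mem hB)
  have hgmat : (g : Matrix (Fin 2) (Fin 2) ℝ) = 1 + d • K := by
    have e1 : MA * MB = b • (MA + (c * a) • K) := by
      rw [hMBK, mul_smul_comm, mul_add, mul_one, mul_smul_comm, hAK, smul_smul]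
    have e2 : (MA + (c * a) • K) * MAi = 1 + (c * a * a) • K := by
      rw [add_mul, hAAi, smul_mul_assoc, hKAi, smul_smul]
    have e3 : ((1 : Matrix (Fin 2) (Fin 2) ℝ) + (c * a * a) • K) * (1 - c • K)
        = 1 + d • K := by
      rw [add_mul, one_mul, mul_sub, mul_one, smul_mul_assoc, mul_smul_comm, smul_smul,
        Kmat_mul_self]
      simp only [smul_zero, sub_zero, ← hKdef, hddef]
      module
    calc (g : Matrix (Fin 2) (Fin 2) ℝ) = MA * MB * MAi * MBi := by
          simp only [hgdef, Matrix.SpecialLinearGroup.coe_mul, ← hMAdef, ← hMBdef,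
            ← hMAidef, ← hMBidef]
    _ = (b • (MA + (c * a) • K)) * MAi * MBi := by rw [e1]
    _ = (b • ((MA + (c * a) • K) * MAi)) * MBi := by rw [smul_mul_assoc]
    _ = (b • ((1 : Matrix (Fin 2) (Fin 2) ℝ) + (c * a * a) • K)) * MBi := by rw [e2]
    _ = (b • ((1 : Matrix (Fin 2) (Fin 2) ℝ) + (c * a * a) • K)) *
          (b • ((1 : Matrix (Fin 2) (Fin 2) ℝ) - c • K)) := by rw [hMBiK]
    _ = (b * b) • (((1 : Matrix (Fin 2) (Fin 2) ℝ) + (c * a * a) • K) *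
          ((1 : Matrix (Fin 2) (Fin 2) ℝ) - c • K)) := by
          rw [smul_mul_assoc, mul_smul_comm, smul_smul]
    _ = 1 + d • K := by rw [hb2, one_smul, e3]
  -- choose the contracting element
  have haa : 0 < a * a := mul_self_pos.mpr ha0
  obtain ⟨A₀, hA₀Γ, s, hs0, hs1, hconj⟩ :
      ∃ A₀ ∈ Γ, ∃ s : ℝ, 0 < s ∧ s < 1 ∧
        (A₀ : Matrix (Fin 2) (Fin 2) ℝ) * K *
          ((A₀⁻¹ : Matrix.SpecialLinearGroup (Fin 2) ℝ) : Matrix (Fin 2) (Fin 2) ℝ)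
          = s • K := by
    rcases lt_or_gt_of_ne (fun h : a * a = 1 => hasq (by nlinarith)) with h | h
    · refine ⟨A, hA, a * a, haa, h, ?_⟩
      rw [← hMAdef, ← hMAidef, hAK, smul_mul_assoc, hKAi, smul_smul]
    · refine ⟨A⁻¹, inv_mem hA, (a * a)⁻¹, by positivity, ?_, ?_⟩
      · rw [inv_lt_one_iff₀]; right; exact h
      · have hKA' : K * MA = a⁻¹ • K := by
          calc K * MA = (a⁻¹ * a) • (K * MA) := by rw [inv_mul_cancel₀ ha0, one_smul]
          _ = a⁻¹ • (a • (K * MA)) := by rw [smul_smul]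
          _ = a⁻¹ • K := by rw [hKA]
        rw [inv_inv, ← hMAidef, ← hMAdef, hAiK, smul_mul_assoc, hKA', smul_smul, ← mul_inv]
  -- conjugates by powers
  set M₀ : Matrix (Fin 2) (Fin 2) ℝ := (A₀ : Matrix (Fin 2) (Fin 2) ℝ) with hM₀def
  set M₀i : Matrix (Fin 2) (Fin 2) ℝ := ((A₀⁻¹ : Matrix.SpecialLinearGroup (Fin 2) ℝ) :
    Matrix (Fin 2) (Fin 2) ℝ) with hM₀idef
  have h00i : M₀ * M₀i = 1 := by
    rw [hM₀def, hM₀idef, ← Matrix.SpecialLinearGroup.coe_mul, mul_inv_cancel,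
      Matrix.SpecialLinearGroup.coe_one]
  have key : ∀ n : ℕ, M₀ ^ n * K * M₀i ^ n = (s ^ n) • K := by
    intro n
    induction n with
    | zero => simp
    | succ n ih =>
      rw [pow_succ' M₀, pow_succ M₀i]
      calc M₀ * M₀ ^ n * K * (M₀i ^ n * M₀i)
          = M₀ * (M₀ ^ n * K * M₀i ^ n) * M₀i := by noncomm_ring
        _ = M₀ * ((s ^ n) • K) * M₀i := by rw [ih]
        _ = (s ^ n) • (M₀ * K * M₀i) := by rw [mul_smul_comm, smul_mul_assoc]
        _ = (s ^ n) • (s • K) := by rw [hconj]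
        _ = (s ^ (n + 1)) • K := by rw [smul_smul, ← pow_succ]
  -- matrices of the conjugated commutators
  have hpow : ∀ n : ℕ, ((A₀ ^ n * g * (A₀ ^ n)⁻¹ : Matrix.SpecialLinearGroup (Fin 2) ℝ) :
      Matrix (Fin 2) (Fin 2) ℝ) = 1 + (d * s ^ n) • K := by
    intro n
    have hc1 : ((A₀ ^ n : Matrix.SpecialLinearGroup (Fin 2) ℝ) :
        Matrix (Fin 2) (Fin 2) ℝ) = M₀ ^ n := Matrix.SpecialLinearGroup.coe_pow A₀ n
    have hc2 : (((A₀ ^ n)⁻¹ : Matrix.SpecialLinearGroup (Fin 2) ℝ) :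
        Matrix (Fin 2) (Fin 2) ℝ) = M₀i ^ n := by
      rw [← inv_pow]
      exact Matrix.SpecialLinearGroup.coe_pow A₀⁻¹ n
    have hpowinv : M₀ ^ n * M₀i ^ n = 1 := by
      rw [← hc1, ← hc2, ← Matrix.SpecialLinearGroup.coe_mul, mul_inv_cancel,
        Matrix.SpecialLinearGroup.coe_one]
    rw [Matrix.SpecialLinearGroup.coe_mul, Matrix.SpecialLinearGroup.coe_mul, hc1, hc2,
      hgmat]
    rw [mul_add, mul_one, add_mul, hpowinv, mul_smul_comm, smul_mul_assoc, mul_assoc,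
      ← mul_assoc (M₀ ^ n) K (M₀i ^ n), key n]
    rw [smul_smul]
  -- the sequence of conjugated commutators in Γ
  set u : ℕ → Γ := fun n => ⟨A₀ ^ n * g * (A₀ ^ n)⁻¹,
    mul_mem (mul_mem (pow_mem hA₀Γ n) hgΓ) (inv_mem (pow_mem hA₀Γ n))⟩ with hudef
  -- it tends to 1 in the matrix topology
  have hlim0 : Filter.Tendsto (fun n : ℕ => d * s ^ n) Filter.atTop (nhds 0) := by
    simpa using (tendsto_pow_atTop_nhds_zero_of_lt_one hs0.le hs1).const_mul d
  have hcont : Continuous (fun t : ℝ => (1 + t • K : Matrix (Fin 2) (Fin 2) ℝ)) :=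
    continuous_const.add (continuous_id.smul continuous_const)
  have hlim : Filter.Tendsto
      (fun n : ℕ => ((u n : Matrix.SpecialLinearGroup (Fin 2) ℝ) : Matrix (Fin 2) (Fin 2) ℝ))
      Filter.atTop (nhds (1 : Matrix (Fin 2) (Fin 2) ℝ)) := by
    have h1 : Filter.Tendsto (fun n : ℕ => (1 + (d * s ^ n) • K : Matrix (Fin 2) (Fin 2) ℝ))
        Filter.atTop (nhds (1 : Matrix (Fin 2) (Fin 2) ℝ)) := by
      have := (hcont.tendsto 0).comp hlim0
      simpa [Function.comp_def] using this
    convert h1 using 2 with n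
    exact hpow n
  -- inducing maps
  have hind1 : Topology.IsInducing
      (fun g : Matrix.SpecialLinearGroup (Fin 2) ℝ => (g : Matrix (Fin 2) (Fin 2) ℝ)) := ⟨rfl⟩
  have hind2 : Topology.IsInducing (Subtype.val : Γ → Matrix.SpecialLinearGroup (Fin 2) ℝ) :=
    ⟨rfl⟩
  have hind : Topology.IsInducing
      (fun γ : Γ => ((γ : Matrix.SpecialLinearGroup (Fin 2) ℝ) : Matrix (Fin 2) (Fin 2) ℝ)) :=
    hind1.comp hind2
  -- hence u tends to 1 in Γ, so is eventually 1 by discreteness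
  have hu1 : Filter.Tendsto u Filter.atTop (nhds (1 : Γ)) := by
    rw [hind.tendsto_nhds_iff]
    exact hlim
  have hev : ∀ᶠ n in Filter.atTop, u n = (1 : Γ) := by
    rw [nhds_discrete] at hu1
    exact hu1 (by simp : {(1:Γ)} ∈ (pure (1:Γ) : Filter Γ))
  obtain ⟨n, hn⟩ := hev.exists
  -- contradiction: the matrix of `u n` is not 1
  have hmat : (1 : Matrix (Fin 2) (Fin 2) ℝ) + (d * s ^ n) • K = 1 := by
    rw [← hpow n]
    have : (u n : Matrix.SpecialLinearGroup (Fin 2) ℝ) = A₀ ^ n * g * (A₀ ^ n)⁻¹ := rfl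
    rw [← this, hn]
    simp [Matrix.SpecialLinearGroup.coe_one]
  have hds : d * s ^ n ≠ 0 := mul_ne_zero hd0 (pow_ne_zero n (ne_of_gt hs0))
  have hK0 : K = 0 := by
    have h0 : (d * s ^ n) • K = 0 := by
      have := hmat
      rwa [add_eq_left] at this
    exact (smul_eq_zero.mp h0).resolve_left hds
  exact hKne hK0
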